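/- Let (Ω, P) be a probability space, J and L positive integers. For j = 1,…,J let D_j be ℕ-valued random variables with probability generating functions Λ_j(x) = Σ_d P(D_j = d) x^d, and for each j let (S_{j,n})_{n∈ℕ} be random objects each consisting of: a class label C_{j,n} ∈ {1,…,L} with P(C_{j,n} = m) = w_m (w_m ≥ 0, Σ_m w_m = 1), a channel-success indicator E_{j,n} ∈ {0,1} with P(E_{j,n} = 1 | C_{j,n} = m) = 1 − e_m (e_m ∈ [0,1]), ℕ-valued inner degrees D'_{j,n,k} (k = 1,…,L) with generating functions ω_k, and {0,1}-valued leaf indicators Z_{j,n,k,t} with P(Z_{j,n,k,t} = 1) = 1 − y_k (y_k ∈ [0,1]); assume all the random variables D_j, (C_{j,n}, E_{j,n}), D'_{j,n,k}, Z_{j,n,k,t} across all indices are mutually independent except that E_{j,n} may depend on C_{j,n} as specified. Define the slot-resolved event R_{j,n} = {E_{j,n} = 1} ∩ ⋂_{k=1}^L ⋂_{t < D'_{j,n,k}} {Z_{j,n,k,t} = 1}, and the user-unresolved event A = ⋂_{j=1}^J ⋂_{n < D_j} R_{j,n}^c. Then P(A) = ∏_{j=1}^J Λ_j( 1 − Σ_{m=1}^L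 w_m (1 − e_m) ∏_{k=1}^L ω_k(1 − y_k) ). -/

import Mathlib

open MeasureTheory ProbabilityTheory Finset

/-- Index of the depth-2 and-or tree family: outer degrees `D j`, slot pairs
`(C j n, E j n)`, inner degrees `D' j n k`, and leaf indicators `Z j n k t`. -/
abbrev andOrIndex (J L : ℕ) : Type :=
  Fin J ⊕ (Fin J × ℕ) ⊕ (Fin J × ℕ × Fin L) ⊕ (Fin J × ℕ × Fin L × ℕ)

/-- Codomain of the `i`-th member of the family. -/
abbrev andOrType (J L : ℕ) : andOrIndex J L → Type := fun i =>
  match i with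
  | .inl _ => ℕ
  | .inr (.inl _) => Fin L × Bool
  | .inr (.inr (.inl _)) => ℕ
  | .inr (.inr (.inr _)) => Bool

instance andOrMeasurableSpace (J L : ℕ) : ∀ i, MeasurableSpace (andOrType J L i) := fun i =>
  match i with
  | .inl _ => inferInstance
  | .inr (.inl _) => inferInstance
  | .inr (.inr (.inl _)) => inferInstance
  | .inr (.inr (.inr _)) => inferInstance

section aux

variable {Ω' ι κ : Type*} {mΩ : MeasurableSpace Ω'} {μ : Measure Ω'}

theorem iIndep_iSup_of_pairwise_disjoint {m : ι → MeasurableSpace Ω'}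
    (h_le : ∀ i, m i ≤ mΩ) (h : iIndep m μ) (T : κ → Set ι)
    (hT : Pairwise (Function.onFun Disjoint T)) :
    iIndep (fun k => ⨆ i ∈ T k, m i) μ := by
  classical
  set π : ι → Set (Set Ω') := fun i => {s | MeasurableSet[m i] s} with hπ
  refine iIndepSets.iIndep ?_ (fun k => piiUnionInter π (T k)) ?_ ?_ ?_
  · intro k
    refine iSup₂_le fun i _ => h_le i
  · intro k
    exact isPiSystem_piiUnionInter π (fun i => @MeasurableSpace.isPiSystem_measurableSet Ω' (m i)) _
  · intro k
    exact (generateFrom_piiUnionInter_measurableSet m (T k)).symm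
  · rw [iIndepSets_iff]
    intro s f hf
    choose! p hpT g hgπ hfg using hf
    have hdisj : ∀ k1 ∈ s, ∀ k2 ∈ s, k1 ≠ k2 → Disjoint (p k1) (p k2) := by
      intro k1 h1 k2 h2 hne
      have := hT hne
      rw [Finset.disjoint_left]
      intro a ha1 ha2
      exact Set.disjoint_left.1 this (hpT k1 h1 ha1) (hpT k2 h2 ha2)
    set u : Finset ι := s.biUnion p with hu
    set G : ι → Set Ω' := fun i => ⋂ k ∈ s.filter (fun k => i ∈ p k), g k i with hG
    have hGsingle : ∀ k ∈ s, ∀ i ∈ p k, G i = g k i := by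
      intro k hk i hi
      have hfilter : s.filter (fun k => i ∈ p k) = {k} := by
        ext k'
        simp only [Finset.mem_filter, Finset.mem_singleton]
        constructor
        · rintro ⟨hk', hi'⟩
          by_contra hne
          exact (Finset.disjoint_left.1 (hdisj k' hk' k hk hne) hi') hi
        · rintro rfl; exact ⟨hk, hi⟩
      simp only [hG]
      rw [hfilter]
      simp
    have hinter : (⋂ k ∈ s, f k) = ⋂ i ∈ u, G i := by
      have h1 : (⋂ k ∈ s, f k) = ⋂ k ∈ s, ⋂ i ∈ p k, g k i := by
        refine Set.iInter₂_congr fun k hk => ?_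
        rw [hfg k hk]
      rw [h1]
      ext x
      simp only [Set.mem_iInter, hu, Finset.mem_biUnion, hG]
      constructor
      · intro hx i hi
        obtain ⟨k, hk, hik⟩ := hi
        intro k' hk'
        simp only [Finset.mem_filter] at hk'
        exact hx k' hk'.1 i hk'.2
      · intro hx k hk i hi
        exact hx i ⟨k, hk, hi⟩ k (by simp [Finset.mem_filter, hk, hi])
    have hGmeas : ∀ i ∈ u, MeasurableSet[m i] (G i) := by
      intro i hi
      refine Finset.measurableSet_biInter _ fun k hk => ?_
      exact hgπ k (Finset.mem_filter.1 hk).1 i (Finset.mem_filter.1 hk).2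
    rw [hinter, h.meas_biInter (fun i hi => hGmeas i hi)]
    rw [Finset.prod_biUnion hdisj]
    refine Finset.prod_congr rfl fun k hk => ?_
    have hprod : ∏ i ∈ p k, μ (G i) = ∏ i ∈ p k, μ (g k i) :=
      Finset.prod_congr rfl fun i hi => by rw [hGsingle k hk i hi]
    rw [hprod, hfg k hk, h.meas_biInter (fun i hi => hgπ k hk i hi)]

theorem pairwise_disjoint_fiber' {γ : Type*} (g : ι → γ) :
    Pairwise (Function.onFun Disjoint (fun c => g ⁻¹' {c})) := by
  intro a b hab
  rw [Function.onFun, Set.disjoint_left]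
  rintro i (hi : g i = a) (hi' : g i = b)
  exact hab (hi.symm.trans hi')

end aux

/-- Theorem 1 of the paper, one iteration on a depth-2 and-or tree: the probability that a
user is unresolved (every incident slot fails to resolve it) equals
`∏_j Λ_j(1 − Σ_m w_m (1 − e_m) ∏_k ω_k(1 − y_k))`. -/
theorem and_or_tree_evaluation {Ω : Type} [MeasurableSpace Ω]
    (P : Measure Ω) [IsProbabilityMeasure P]
    (J L : ℕ) (hJ : 0 < J) (hL : 0 < L)
    (D : Fin J → Ω → ℕ)
    (C : Fin J → ℕ → Ω → Fin L) (E : Fin J → ℕ → Ω → Bool)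
    (D' : Fin J → ℕ → Fin L → Ω → ℕ)
    (Z : Fin J → ℕ → Fin L → ℕ → Ω → Bool)
    (w : Fin L → ℝ) (e : Fin L → ℝ) (y : Fin L → ℝ)
    (hw0 : ∀ m, 0 ≤ w m) (hwsum : ∑ m, w m = 1)
    (he : ∀ m, e m ∈ Set.Icc (0 : ℝ) 1) (hy : ∀ k, y k ∈ Set.Icc (0 : ℝ) 1)
    (hC : ∀ j n m, (P {ω | C j n ω = m}).toReal = w m)
    (hE : ∀ j n m,
      (P ({ω | E j n ω = true} ∩ {ω | C j n ω = m})).toReal = (1 - e m) * w m)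
    (hZ : ∀ j n k t, (P {ω | Z j n k t ω = true}).toReal = 1 - y k)
    (Λ : Fin J → ℝ → ℝ)
    (hΛ : ∀ j x, Λ j x = ∑' d : ℕ, (P {ω | D j ω = d}).toReal * x ^ d)
    (ωf : Fin L → ℝ → ℝ)
    (hωf : ∀ j n k x, ωf k x = ∑' d : ℕ, (P {ω | D' j n k ω = d}).toReal * x ^ d)
    (hDm : ∀ j, Measurable (D j)) (hCm : ∀ j n, Measurable (C j n))
    (hEm : ∀ j n, Measurable (E j n)) (hD'm : ∀ j n k, Measurable (D' j n k))
    (hZm : ∀ j n k t, Measurable (Z j n k t))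
    (hindep : iIndepFun (m := andOrMeasurableSpace J L)
      (fun i : andOrIndex J L =>
        match i with
        | .inl j => D j
        | .inr (.inl p) => fun ω => (C p.1 p.2 ω, E p.1 p.2 ω)
        | .inr (.inr (.inl q)) => D' q.1 q.2.1 q.2.2
        | .inr (.inr (.inr s)) => Z s.1 s.2.1 s.2.2.1 s.2.2.2) P) :
    (P {ω | ∀ j, ∀ n, n < D j ω →
        ¬ (E j n ω = true ∧ ∀ k, ∀ t, t < D' j n k ω → Z j n k t ω = true)}).toReal
      = ∏ j, Λ j (1 - ∑ m, w m * (1 - e m) * ∏ k, ωf k (1 - y k)) := by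
  classical
  -- the comap σ-algebras
  set F : ∀ i : andOrIndex J L, Ω → andOrType J L i :=
    (fun i : andOrIndex J L =>
        match i with
        | .inl j => D j
        | .inr (.inl p) => fun ω => (C p.1 p.2 ω, E p.1 p.2 ω)
        | .inr (.inr (.inl q)) => D' q.1 q.2.1 q.2.2
        | .inr (.inr (.inr s)) => Z s.1 s.2.1 s.2.2.1 s.2.2.2) with hF
  set M : andOrIndex J L → MeasurableSpace Ω := fun i =>
    MeasurableSpace.comap (F i) (andOrMeasurableSpace J L i) with hM
  have hiI : iIndep M P := hindep.iIndep
  have hMle : ∀ i, M i ≤ ‹MeasurableSpace Ω› := by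
    rintro (j | p | q | s)
    · exact (hDm j).comap_le
    · exact ((hCm p.1 p.2).prodMk (hEm p.1 p.2)).comap_le
    · exact (hD'm q.1 q.2.1 q.2.2).comap_le
    · exact (hZm s.1 s.2.1 s.2.2.1 s.2.2.2).comap_le
  -- measurability of everything on Bool / ℕ valued maps
  have hNatT : ∀ s : Set ℕ, MeasurableSet s := fun _ => MeasurableSpace.measurableSet_top
  have hBoolT : ∀ s : Set Bool, MeasurableSet s := fun _ => MeasurableSpace.measurableSet_top
  -- comap measurable sets
  have hmD : ∀ (j : Fin J) (s : Set ℕ), MeasurableSet[M (Sum.inl j)] (D j ⁻¹' s) :=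
    fun j s => ⟨s, hNatT s, rfl⟩
  have hmE : ∀ j n, MeasurableSet[M (Sum.inr (Sum.inl (j, n)))]
      ((fun ω => (C j n ω, E j n ω)) ⁻¹' (Prod.snd ⁻¹' {b | b = true})) :=
    fun j n => ⟨Prod.snd ⁻¹' {b | b = true}, measurable_snd (hBoolT _), rfl⟩
  have hmEC : ∀ j n (mm : Fin L), MeasurableSet[M (Sum.inr (Sum.inl (j, n)))]
      ((fun ω => (C j n ω, E j n ω)) ⁻¹' (Prod.snd ⁻¹' {b | b = true} ∩ Prod.fst ⁻¹' {mm})) :=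
    fun j n mm => ⟨Prod.snd ⁻¹' {b | b = true} ∩ Prod.fst ⁻¹' {mm},
      (measurable_snd (hBoolT _)).inter (measurable_fst (measurableSet_singleton mm)), rfl⟩
  have hmD' : ∀ j n k (s : Set ℕ),
      MeasurableSet[M (Sum.inr (Sum.inr (Sum.inl (j, n, k))))] (D' j n k ⁻¹' s) :=
    fun j n k s => ⟨s, hNatT s, rfl⟩
  have hmZ : ∀ j n k t, MeasurableSet[M (Sum.inr (Sum.inr (Sum.inr (j, n, k, t))))]
      (Z j n k t ⁻¹' {b | b = true}) :=
    fun j n k t => ⟨{b | b = true}, hBoolT _, rfl⟩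
  -- events
  set Bev : Fin J → ℕ → Fin L → Set Ω := fun j n k =>
    {ω | ∀ t, t < D' j n k ω → Z j n k t ω = true} with hBev
  set Rev : Fin J → ℕ → Set Ω := fun j n =>
    {ω | E j n ω = true ∧ ∀ k, ∀ t, t < D' j n k ω → Z j n k t ω = true} with hRev
  set Aev : Fin J → Set Ω := fun j => ⋂ n : ℕ, ({ω | n < D j ω} ∩ Rev j n)ᶜ with hAev
  -- set identities
  have hBevInter : ∀ j n k,
      Bev j n k = ⋂ t : ℕ, ({ω | t < D' j n k ω}ᶜ ∪ {ω | Z j n k t ω = true}) := by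
    intro j n k
    ext ω
    simp only [hBev, Set.mem_setOf_eq, Set.mem_iInter, Set.mem_union, Set.mem_compl_iff]
    constructor
    · intro h t
      by_cases ht : t < D' j n k ω
      · exact Or.inr (h t ht)
      · exact Or.inl ht
    · intro h t ht
      rcases h t with h' | h'
      · exact absurd ht h'
      · exact h'
  have hRevInter : ∀ j n, Rev j n = {ω | E j n ω = true} ∩ ⋂ k : Fin L, Bev j n k := by
    intro j n
    ext ω
    simp only [hRev, hBev, Set.mem_setOf_eq, Set.mem_inter_iff, Set.mem_iInter]
  have hBevUnion : ∀ j n k, Bev j n k = ⋃ d : ℕ,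
      ({ω | D' j n k ω = d} ∩ ⋂ t ∈ Finset.range d, {ω | Z j n k t ω = true}) := by
    intro j n k
    ext ω
    simp only [hBev, Set.mem_setOf_eq, Set.mem_iUnion, Set.mem_inter_iff, Set.mem_iInter,
      Finset.mem_range]
    constructor
    · intro h
      exact ⟨D' j n k ω, rfl, fun t ht => h t ht⟩
    · rintro ⟨d, hd, h⟩ t ht
      exact h t (by omega)
  have hAevUnion : ∀ j, Aev j = ⋃ d : ℕ,
      ({ω | D j ω = d} ∩ ⋂ n ∈ Finset.range d, (Rev j n)ᶜ) := by
    intro j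
    ext ω
    simp only [hAev, Set.mem_iInter, Set.mem_compl_iff, Set.mem_inter_iff, Set.mem_setOf_eq,
      Set.mem_iUnion, Finset.mem_range, not_and]
    constructor
    · intro h
      exact ⟨D j ω, rfl, fun n hn => h n hn⟩
    · rintro ⟨d, hd, h⟩ n hn
      exact h n (by omega)
  have hmainset : {ω | ∀ j, ∀ n, n < D j ω →
      ¬ (E j n ω = true ∧ ∀ k, ∀ t, t < D' j n k ω → Z j n k t ω = true)} = ⋂ j, Aev j := by
    ext ω
    simp only [hAev, hRev, Set.mem_setOf_eq, Set.mem_iInter, Set.mem_compl_iff,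
      Set.mem_inter_iff, not_and]
  -- plain measurability
  have hsD'lt : ∀ j n k t, MeasurableSet {ω | t < D' j n k ω} :=
    fun j n k t => hD'm j n k (hNatT (Set.Ioi t))
  have hsZ : ∀ j n k t, MeasurableSet {ω | Z j n k t ω = true} :=
    fun j n k t => hZm j n k t (hBoolT {b | b = true})
  have hsE : ∀ j n, MeasurableSet {ω | E j n ω = true} :=
    fun j n => hEm j n (hBoolT {b | b = true})
  have hsC : ∀ j n (mm : Fin L), MeasurableSet {ω | C j n ω = mm} :=
    fun j n mm => hCm j n (measurableSet_singleton mm)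
  have hsDeq : ∀ j (d : ℕ), MeasurableSet {ω | D j ω = d} :=
    fun j d => hDm j (hNatT {d})
  have hsD'eq : ∀ j n k (d : ℕ), MeasurableSet {ω | D' j n k ω = d} :=
    fun j n k d => hD'm j n k (hNatT {d})
  have hsDlt : ∀ j (n : ℕ), MeasurableSet {ω | n < D j ω} :=
    fun j n => hDm j (hNatT (Set.Ioi n))
  have hBmeas : ∀ j n k, MeasurableSet (Bev j n k) := by
    intro j n k
    rw [hBevInter]
    exact MeasurableSet.iInter fun t => ((hsD'lt j n k t).compl.union (hsZ j n k t))
  have hRmeas : ∀ j n, MeasurableSet (Rev j n) := by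
    intro j n
    rw [hRevInter]
    exact (hsE j n).inter (MeasurableSet.iInter fun k => hBmeas j n k)
  -- lifting measurability into grouped σ-algebras
  have hlift : ∀ {γ : Type} (g : andOrIndex J L → γ) (c : γ) (i : andOrIndex J L), g i = c →
      ∀ s : Set Ω, MeasurableSet[M i] s → MeasurableSet[⨆ i' ∈ g ⁻¹' {c}, M i'] s := by
    intro γ g c i hi s hs
    have hle : M i ≤ ⨆ i' ∈ g ⁻¹' {c}, M i' := le_biSup M (show i ∈ g ⁻¹' {c} from hi)
    exact hle s hs
  -- single-slot piece computation
  have hBpiece : ∀ j n k (d : ℕ),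
      P ({ω | D' j n k ω = d} ∩ ⋂ t ∈ Finset.range d, {ω | Z j n k t ω = true})
      = P {ω | D' j n k ω = d} * ∏ t ∈ Finset.range d, P {ω | Z j n k t ω = true} := by
    intro j n k d
    set a : andOrIndex J L := Sum.inr (Sum.inr (Sum.inl (j, n, k))) with ha
    set ι : ℕ → andOrIndex J L := fun t => Sum.inr (Sum.inr (Sum.inr (j, n, k, t))) with hι
    have hmem : a ∉ (Finset.range d).image ι := by simp [ha, hι]
    have hinj : ∀ t1 ∈ Finset.range d, ∀ t2 ∈ Finset.range d, ι t1 = ι t2 → t1 = t2 := by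
      intro t1 _ t2 _ h
      simpa [hι] using h
    set f : andOrIndex J L → Set Ω := fun i =>
      match i with
      | .inr (.inr (.inl q')) => {ω | D' q'.1 q'.2.1 q'.2.2 ω = d}
      | .inr (.inr (.inr s')) => {ω | Z s'.1 s'.2.1 s'.2.2.1 s'.2.2.2 ω = true}
      | _ => Set.univ with hf2
    have hmeas : ∀ i ∈ insert a ((Finset.range d).image ι), MeasurableSet[M i] (f i) := by
      intro i hi
      rcases Finset.mem_insert.1 hi with rfl | hi
      · exact hmD' j n k {d}
      · obtain ⟨t, _, rfl⟩ := Finset.mem_image.1 hi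
        exact hmZ j n k t
    have h1 := hiI.meas_biInter (S := insert a ((Finset.range d).image ι)) (s := f) hmeas
    rw [Finset.set_biInter_insert, Finset.prod_insert hmem, Finset.prod_image hinj] at h1
    have himg : (⋂ i ∈ (Finset.range d).image ι, f i) = ⋂ t ∈ Finset.range d, f (ι t) := by
      ext ω
      simp only [Set.mem_iInter, Finset.mem_image]
      constructor
      · intro h t ht
        exact h (ι t) ⟨t, ht, rfl⟩
      · rintro h i ⟨t, ht, rfl⟩
        exact h t ht
    rw [himg] at h1
    exact h1
  -- slot-branch probability
  have hBP : ∀ j n k, (P (Bev j n k)).toReal = ωf k (1 - y k) := by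
    intro j n k
    have hdisj : Pairwise (Function.onFun Disjoint (fun d : ℕ =>
        {ω | D' j n k ω = d} ∩ ⋂ t ∈ Finset.range d, {ω | Z j n k t ω = true})) := by
      intro d1 d2 h12
      rw [Function.onFun, Set.disjoint_left]
      rintro ω ⟨h1, _⟩ ⟨h2, _⟩
      exact h12 (h1 ▸ h2 ▸ rfl)
    have hmeas : ∀ d : ℕ, MeasurableSet
        ({ω | D' j n k ω = d} ∩ ⋂ t ∈ Finset.range d, {ω | Z j n k t ω = true}) :=
      fun d => (hsD'eq j n k d).inter
        (Finset.measurableSet_biInter _ fun t _ => hsZ j n k t)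
    rw [hBevUnion j n k, measure_iUnion hdisj hmeas,
      ENNReal.tsum_toReal_eq (fun d => measure_ne_top P _), hωf j n k]
    refine tsum_congr fun d => ?_
    rw [hBpiece j n k d, ENNReal.toReal_mul, ENNReal.toReal_prod]
    congr 1
    rw [Finset.prod_congr rfl (fun t _ => hZ j n k t), Finset.prod_const, Finset.card_range]
  -- channel probability
  have hEP : ∀ j n, (P {ω | E j n ω = true}).toReal = ∑ m, (1 - e m) * w m := by
    intro j n
    have hun : {ω | E j n ω = true}
        = ⋃ mm : Fin L, ({ω | E j n ω = true} ∩ {ω | C j n ω = mm}) := by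
      ext ω
      simp only [Set.mem_iUnion, Set.mem_inter_iff, Set.mem_setOf_eq]
      constructor
      · intro h
        exact ⟨C j n ω, h, rfl⟩
      · rintro ⟨mm, h, _⟩
        exact h
    have hdisj : Pairwise (Function.onFun Disjoint (fun mm : Fin L =>
        {ω | E j n ω = true} ∩ {ω | C j n ω = mm})) := by
      intro m1 m2 h12
      rw [Function.onFun, Set.disjoint_left]
      rintro ω ⟨_, h1⟩ ⟨_, h2⟩
      exact h12 (h1 ▸ h2 ▸ rfl)
    rw [hun, measure_iUnion hdisj (fun mm => (hsE j n).inter (hsC j n mm)), tsum_fintype,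
      ENNReal.toReal_sum (fun m _ => measure_ne_top P _)]
    exact Finset.sum_congr rfl fun m _ => hE j n m
  -- slot grouping
  set g3 : andOrIndex J L → Option (Fin L) := fun i =>
    match i with
    | .inr (.inr (.inl q')) => some q'.2.2
    | .inr (.inr (.inr s')) => some s'.2.2.1
    | _ => none with hg3
  have hiI3 := iIndep_iSup_of_pairwise_disjoint hMle hiI (fun c => g3 ⁻¹' {c})
    (pairwise_disjoint_fiber' g3)
  have hRslotP : ∀ j n, (P (Rev j n)).toReal
      = (∑ m, (1 - e m) * w m) * ∏ k, ωf k (1 - y k) := by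
    intro j n
    set f3 : Option (Fin L) → Set Ω := fun o =>
      o.elim {ω | E j n ω = true} (fun k => Bev j n k) with hf3
    have hm3 : ∀ o, MeasurableSet[⨆ i ∈ g3 ⁻¹' {o}, M i] (f3 o) := by
      rintro (_ | k)
      · exact hlift g3 none (Sum.inr (Sum.inl (j, n))) rfl _ (hmE j n)
      · show MeasurableSet[⨆ i ∈ g3 ⁻¹' {some k}, M i] (Bev j n k)
        rw [hBevInter]
        refine MeasurableSet.iInter fun t => MeasurableSet.union ?_ ?_
        · exact (hlift g3 (some k) (Sum.inr (Sum.inr (Sum.inl (j, n, k)))) rfl _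
            (hmD' j n k (Set.Ioi t))).compl
        · exact hlift g3 (some k) (Sum.inr (Sum.inr (Sum.inr (j, n, k, t)))) rfl _
            (hmZ j n k t)
    have h1 := hiI3.meas_iInter (s := f3) hm3
    have hIeq : (⋂ o : Option (Fin L), f3 o) = Rev j n := by
      rw [Set.iInter_option, hRevInter j n]
      rfl
    rw [← hIeq, h1, Fintype.prod_option, ENNReal.toReal_mul, ENNReal.toReal_prod]
    simp only [hf3, Option.elim_none, Option.elim_some]
    rw [hEP j n]
    congr 1
    exact Finset.prod_congr rfl fun k _ => hBP j n k
  -- complement probability per slot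
  have hsum_eq : ∑ m, w m * (1 - e m) * ∏ k, ωf k (1 - y k)
      = (∑ m, (1 - e m) * w m) * ∏ k, ωf k (1 - y k) := by
    rw [Finset.sum_mul]
    exact Finset.sum_congr rfl fun m _ => by ring
  have hRc : ∀ j n, (P ((Rev j n)ᶜ)).toReal
      = 1 - ∑ m, w m * (1 - e m) * ∏ k, ωf k (1 - y k) := by
    intro j n
    rw [measure_compl (hRmeas j n) (measure_ne_top P _), measure_univ,
      ENNReal.toReal_sub_of_le prob_le_one ENNReal.one_ne_top, ENNReal.toReal_one,
      hRslotP j n, hsum_eq]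
  -- per-user grouping
  set g2 : andOrIndex J L → Option ℕ := fun i =>
    match i with
    | .inl _ => none
    | .inr (.inl p) => some p.2
    | .inr (.inr (.inl q')) => some q'.2.1
    | .inr (.inr (.inr s')) => some s'.2.1 with hg2
  have hiI2 := iIndep_iSup_of_pairwise_disjoint hMle hiI (fun c => g2 ⁻¹' {c})
    (pairwise_disjoint_fiber' g2)
  have hRevG2 : ∀ j n, MeasurableSet[⨆ i ∈ g2 ⁻¹' {some n}, M i] (Rev j n) := by
    intro j n
    rw [hRevInter]
    refine MeasurableSet.inter ?_ (MeasurableSet.iInter fun k => ?_)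
    · exact hlift g2 (some n) (Sum.inr (Sum.inl (j, n))) rfl _ (hmE j n)
    · rw [hBevInter]
      refine MeasurableSet.iInter fun t => MeasurableSet.union ?_ ?_
      · exact (hlift g2 (some n) (Sum.inr (Sum.inr (Sum.inl (j, n, k)))) rfl _
          (hmD' j n k (Set.Ioi t))).compl
      · exact hlift g2 (some n) (Sum.inr (Sum.inr (Sum.inr (j, n, k, t)))) rfl _
          (hmZ j n k t)
  have hSpiece : ∀ j (d : ℕ),
      P ({ω | D j ω = d} ∩ ⋂ n ∈ Finset.range d, (Rev j n)ᶜ)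
      = P {ω | D j ω = d} * ∏ n ∈ Finset.range d, P ((Rev j n)ᶜ) := by
    intro j d
    have hmem : (none : Option ℕ) ∉ (Finset.range d).image some := by simp
    have hinj : ∀ n1 ∈ Finset.range d, ∀ n2 ∈ Finset.range d,
        (some n1 : Option ℕ) = some n2 → n1 = n2 := by
      intro n1 _ n2 _ h
      simpa using h
    set f2 : Option ℕ → Set Ω := fun o =>
      o.elim {ω | D j ω = d} (fun n => (Rev j n)ᶜ) with hf2
    have hmeas : ∀ o ∈ insert none ((Finset.range d).image some),
        MeasurableSet[⨆ i ∈ g2 ⁻¹' {o}, M i] (f2 o) := by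
      intro o ho
      rcases Finset.mem_insert.1 ho with rfl | ho
      · exact hlift g2 none (Sum.inl j) rfl _ (hmD j {d})
      · obtain ⟨n, _, rfl⟩ := Finset.mem_image.1 ho
        exact (hRevG2 j n).compl
    have h1 := hiI2.meas_biInter (S := insert none ((Finset.range d).image some))
      (s := f2) hmeas
    rw [Finset.set_biInter_insert, Finset.prod_insert hmem, Finset.prod_image hinj] at h1
    have himg : (⋂ o ∈ (Finset.range d).image some, f2 o)
        = ⋂ n ∈ Finset.range d, f2 (some n) := by
      ext ω
      simp only [Set.mem_iInter, Finset.mem_image]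
      constructor
      · intro h n hn
        exact h (some n) ⟨n, hn, rfl⟩
      · rintro h o ⟨n, hn, rfl⟩
        exact h n hn
    rw [himg] at h1
    exact h1
  -- per-user probability
  have hAP : ∀ j, (P (Aev j)).toReal
      = Λ j (1 - ∑ m, w m * (1 - e m) * ∏ k, ωf k (1 - y k)) := by
    intro j
    have hdisj : Pairwise (Function.onFun Disjoint (fun d : ℕ =>
        {ω | D j ω = d} ∩ ⋂ n ∈ Finset.range d, (Rev j n)ᶜ)) := by
      intro d1 d2 h12
      rw [Function.onFun, Set.disjoint_left]
      rintro ω ⟨h1, _⟩ ⟨h2, _⟩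
      exact h12 (h1 ▸ h2 ▸ rfl)
    have hmeas : ∀ d : ℕ, MeasurableSet
        ({ω | D j ω = d} ∩ ⋂ n ∈ Finset.range d, (Rev j n)ᶜ) :=
      fun d => (hsDeq j d).inter
        (Finset.measurableSet_biInter _ fun n _ => (hRmeas j n).compl)
    rw [hAevUnion j, measure_iUnion hdisj hmeas,
      ENNReal.tsum_toReal_eq (fun d => measure_ne_top P _), hΛ j]
    refine tsum_congr fun d => ?_
    rw [hSpiece j d, ENNReal.toReal_mul, ENNReal.toReal_prod]
    congr 1
    rw [Finset.prod_congr rfl (fun n _ => hRc j n), Finset.prod_const, Finset.card_range]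
  -- top-level grouping
  set g1 : andOrIndex J L → Fin J := fun i =>
    match i with
    | .inl j => j
    | .inr (.inl p) => p.1
    | .inr (.inr (.inl q')) => q'.1
    | .inr (.inr (.inr s')) => s'.1 with hg1
  have hiI1 := iIndep_iSup_of_pairwise_disjoint hMle hiI (fun c => g1 ⁻¹' {c})
    (pairwise_disjoint_fiber' g1)
  have hAevG1 : ∀ j, MeasurableSet[⨆ i ∈ g1 ⁻¹' {j}, M i] (Aev j) := by
    intro j
    rw [hAev]
    refine MeasurableSet.iInter fun n => MeasurableSet.compl (MeasurableSet.inter ?_ ?_)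
    · exact hlift g1 j (Sum.inl j) rfl _ (hmD j (Set.Ioi n))
    · rw [hRevInter]
      refine MeasurableSet.inter ?_ (MeasurableSet.iInter fun k => ?_)
      · exact hlift g1 j (Sum.inr (Sum.inl (j, n))) rfl _ (hmE j n)
      · rw [hBevInter]
        refine MeasurableSet.iInter fun t => MeasurableSet.union ?_ ?_
        · exact (hlift g1 j (Sum.inr (Sum.inr (Sum.inl (j, n, k)))) rfl _
            (hmD' j n k (Set.Ioi t))).compl
        · exact hlift g1 j (Sum.inr (Sum.inr (Sum.inr (j, n, k, t)))) rfl _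
            (hmZ j n k t)
  have hfinal := hiI1.meas_iInter (s := Aev) hAevG1
  rw [hmainset, hfinal, ENNReal.toReal_prod]
  exact Finset.prod_congr rfl fun j _ => hAP j
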